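/- Let T be the caterpillar C(0,...,0,2,0,...,0) obtained from a path P_{2n+1} with vertices v_1, ..., v_{2n+1} by attaching 2 pendant vertices to one even-indexed vertex v_{2i} (and none elsewhere). Then the largest adjacency eigenvalue of T satisfies λ_1(T)^2 < 5. -/

import Mathlib

open scoped Classical

/-- Characteristic polynomial of the adjacency matrix of a graph. -/
noncomputable def gCharpoly {V : Type*} [Fintype V] (G : SimpleGraph V) : Polynomial ℝ :=
  letI := Classical.decEq V
  letI := Classical.decRel G.Adj
  (G.adjMatrix ℝ).charpoly

/-- Adjacency eigenvalues listed in non-increasing order (with multiplicity). -/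
noncomputable def eigsDesc {V : Type*} [Fintype V] (G : SimpleGraph V) : List ℝ :=
  ((gCharpoly G).roots.sort (· ≤ ·)).reverse

/-- Number of adjacency eigenvalues in the open interval (-1, 1), with multiplicity. -/
noncomputable def numIn {V : Type*} [Fintype V] (G : SimpleGraph V) : ℕ :=
  ((gCharpoly G).roots.filter (fun x => -1 < x ∧ x < 1)).card

/-- Multiplicity of `lam` as an adjacency eigenvalue. -/
noncomputable def multOf {V : Type*} [Fintype V] (G : SimpleGraph V) (lam : ℝ) : ℕ :=
  (gCharpoly G).roots.count lam

/-- Nullity: dimension of the kernel of the adjacency matrix. -/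
noncomputable def gNullity {V : Type*} [Fintype V] (G : SimpleGraph V) : ℕ :=
  letI := Classical.decRel G.Adj
  Module.finrank ℝ (LinearMap.ker (G.adjMatrix ℝ).mulVecLin)

/-- Base relation for the caterpillar `C(r₁, …, rₙ)`: the path `P_{2n+1}` on
`Fin (2*n+1)` (vertex `vⱼ` of the paper is index `j-1`), with `r i` pendant
vertices attached to `v_{2(i+1)}`, i.e. to index `2*i+1`. -/
def catRel (n : ℕ) (r : Fin n → ℕ) :
    (Fin (2 * n + 1) ⊕ (Σ i : Fin n, Fin (r i))) →
    (Fin (2 * n + 1) ⊕ (Σ i : Fin n, Fin (r i))) → Prop :=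
  fun x y =>
    match x, y with
    | Sum.inl a, Sum.inl b => (a : ℕ) + 1 = (b : ℕ)
    | Sum.inl a, Sum.inr p => (a : ℕ) = 2 * (p.1 : ℕ) + 1
    | _, _ => False

/-- The caterpillar tree `C(r₁, …, rₙ)`. -/
def caterpillar (n : ℕ) (r : Fin n → ℕ) :
    SimpleGraph (Fin (2 * n + 1) ⊕ (Σ i : Fin n, Fin (r i))) :=
  SimpleGraph.fromRel (catRel n r)

/-- Base relation for `S(r₁, …, rₙ)`: the caterpillar `C(r₁, …, rₙ)`, together with
one new pendant vertex at each vertex `v₁, v₃, …, v_{2n+1}` (the odd-indexed path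
vertices, i.e. indices `0, 2, …, 2n`, which include the two degree-one path endpoints),
and one new pendant vertex at each pendant vertex of the caterpillar. -/
def sRel (n : ℕ) (r : Fin n → ℕ) :
    ((Fin (2 * n + 1) ⊕ (Σ i : Fin n, Fin (r i))) ⊕ (Fin (n + 1) ⊕ (Σ i : Fin n, Fin (r i)))) →
    ((Fin (2 * n + 1) ⊕ (Σ i : Fin n, Fin (r i))) ⊕ (Fin (n + 1) ⊕ (Σ i : Fin n, Fin (r i)))) →
    Prop :=
  fun x y =>
    match x, y with
    | Sum.inl a, Sum.inl b => catRel n r a b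
    | Sum.inl (Sum.inl a), Sum.inr (Sum.inl k) => (a : ℕ) = 2 * (k : ℕ)
    | Sum.inl (Sum.inr p), Sum.inr (Sum.inr q) => p = q
    | _, _ => False

/-- The tree `S(r₁, …, rₙ)`. -/
def sTree (n : ℕ) (r : Fin n → ℕ) :
    SimpleGraph ((Fin (2 * n + 1) ⊕ (Σ i : Fin n, Fin (r i))) ⊕
      (Fin (n + 1) ⊕ (Σ i : Fin n, Fin (r i)))) :=
  SimpleGraph.fromRel (sRel n r)


lemma exists_eigvec {V : Type*} [Fintype V] [DecidableEq V] (A : Matrix V V ℝ) {lam : ℝ}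
    (h : lam ∈ A.charpoly.roots) : ∃ y : V → ℝ, y ≠ 0 ∧ A.mulVec y = lam • y := by
  have hroot : A.charpoly.eval lam = 0 := (Polynomial.isRoot_of_mem_roots h)
  have hdet : (Matrix.diagonal (fun _ : V => lam) - A).det = 0 := by
    have hmap : (Matrix.charmatrix A).map (Polynomial.evalRingHom lam)
        = Matrix.diagonal (fun _ : V => lam) - A := by
      ext i j
      by_cases hij : i = j
      · subst hij
        simp [Matrix.charmatrix_apply_eq, Matrix.map_apply]
      · simp [Matrix.charmatrix_apply_ne _ _ _ hij, Matrix.map_apply,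
          Matrix.diagonal_apply_ne _ hij]
    have hd := RingHom.map_det (Polynomial.evalRingHom lam) (Matrix.charmatrix A)
    rw [RingHom.mapMatrix_apply, hmap] at hd
    rw [← hd]
    simpa [Matrix.charpoly] using hroot
  obtain ⟨y, hy0, hy⟩ := (Matrix.exists_mulVec_eq_zero_iff (M := Matrix.diagonal (fun _ : V => lam) - A)).mpr hdet
  refine ⟨y, hy0, ?_⟩
  have := hy
  rw [Matrix.sub_mulVec] at this
  have h2 : (Matrix.diagonal (fun _ : V => lam)).mulVec y = lam • y := by
    funext v
    simp [Matrix.mulVec_diagonal]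
  rw [h2] at this
  funext v
  have := congrFun this v
  simp only [Pi.sub_apply, Pi.zero_apply, sub_eq_zero] at this
  exact this.symm
lemma graph_eig_bound {V : Type*} [Fintype V] (G : SimpleGraph V) (x : V → ℝ)
    (hx : ∀ v, 0 < x v) (c : ℝ)
    (hAx : ∀ v : V, (∑ w : V, if G.Adj v w then x w else 0) ≤ c * x v)
    {lam : ℝ} (h : lam ∈ (gCharpoly G).roots) : |lam| ≤ c := by
  letI := Classical.decEq V
  letI := Classical.decRel G.Adj
  unfold gCharpoly at h
  obtain ⟨y, hy0, hy⟩ := exists_eigvec (G.adjMatrix ℝ) h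
  obtain ⟨w₀, hw₀⟩ := Function.ne_iff.mp hy0
  have hne : (Finset.univ : Finset V).Nonempty := ⟨w₀, Finset.mem_univ _⟩
  obtain ⟨v₀, -, hmax⟩ := Finset.exists_max_image Finset.univ (fun v => |y v| / x v) hne
  set g : V → ℝ := fun v => |y v| / x v with hg
  have hgnn : 0 ≤ g v₀ := div_nonneg (abs_nonneg _) (hx v₀).le
  have key : ∀ w, |y w| ≤ g v₀ * x w := by
    intro w
    have h1 : g w ≤ g v₀ := hmax w (Finset.mem_univ w)
    have := (div_le_iff₀ (hx w)).mp h1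
    linarith [this]
  have hyv₀eq : |y v₀| = g v₀ * x v₀ := by
    rw [hg]
    exact (div_mul_cancel₀ _ (hx v₀).ne').symm
  have hyv₀ : 0 < |y v₀| := by
    have hgw : 0 < g w₀ := div_pos (abs_pos.mpr hw₀) (hx w₀)
    have : 0 < g v₀ := lt_of_lt_of_le hgw (hmax w₀ (Finset.mem_univ w₀))
    rw [hyv₀eq]; exact mul_pos this (hx v₀)
  have hent : ∀ v w : V, (G.adjMatrix ℝ) v w = if G.Adj v w then 1 else 0 := by
    intro v w; simp [SimpleGraph.adjMatrix_apply]
  have main : |lam| * |y v₀| ≤ c * |y v₀| := by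
    have h1 : lam * y v₀ = ((G.adjMatrix ℝ).mulVec y) v₀ := by
      rw [hy]; simp
    calc |lam| * |y v₀| = |lam * y v₀| := (abs_mul _ _).symm
      _ = |∑ w : V, (G.adjMatrix ℝ) v₀ w * y w| := by rw [h1]; rfl
      _ ≤ ∑ w : V, |(G.adjMatrix ℝ) v₀ w * y w| := Finset.abs_sum_le_sum_abs _ _
      _ = ∑ w : V, (G.adjMatrix ℝ) v₀ w * |y w| := by
          refine Finset.sum_congr rfl fun w _ => ?_
          rw [abs_mul, abs_of_nonneg]
          rw [hent]; positivity
      _ ≤ ∑ w : V, (G.adjMatrix ℝ) v₀ w * (g v₀ * x w) := by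
          refine Finset.sum_le_sum fun w _ => ?_
          refine mul_le_mul_of_nonneg_left (key w) ?_
          rw [hent]; positivity
      _ = g v₀ * ∑ w : V, (G.adjMatrix ℝ) v₀ w * x w := by
          rw [Finset.mul_sum]; refine Finset.sum_congr rfl fun w _ => by ring
      _ = g v₀ * ∑ w : V, (if G.Adj v₀ w then x w else 0) := by
          congr 1
          refine Finset.sum_congr rfl fun w _ => ?_
          rw [hent]
          by_cases hadj : G.Adj v₀ w <;> simp [hadj]
      _ ≤ g v₀ * (c * x v₀) := mul_le_mul_of_nonneg_left (hAx v₀) hgnn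
      _ = c * (g v₀ * x v₀) := by ring
      _ = c * |y v₀| := by rw [← hyv₀eq]
  exact le_of_mul_le_mul_right main hyv₀

-- helpers
lemma sum_ite_coe {N : ℕ} (v : ℕ) (f : Fin N → ℝ) :
    (∑ b : Fin N, if (b : ℕ) = v then f b else 0) = if h : v < N then f ⟨v, h⟩ else 0 := by
  by_cases h : v < N
  · rw [dif_pos h, Finset.sum_eq_single (⟨v, h⟩ : Fin N)]
    · simp
    · intro b _ hb
      rw [if_neg]
      intro hc
      exact hb (Fin.ext hc)
    · intro hb; exact absurd (Finset.mem_univ _) hb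
  · rw [dif_neg h]
    apply Finset.sum_eq_zero
    intro b _
    rw [if_neg]
    intro hc
    exact h (hc ▸ b.isLt)

lemma sum_ite_coe' {N : ℕ} (v : ℕ) (f : Fin N → ℝ) :
    (∑ b : Fin N, if (b : ℕ) + 1 = v then f b else 0)
      = if h : v - 1 < N ∧ 1 ≤ v then f ⟨v - 1, h.1⟩ else 0 := by
  by_cases h : v - 1 < N ∧ 1 ≤ v
  · rw [dif_pos h, Finset.sum_eq_single (⟨v - 1, h.1⟩ : Fin N)]
    · rw [if_pos]; simp; omega
    · intro b _ hb
      rw [if_neg]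
      intro hc
      exact hb (Fin.ext (by simp; omega))
    · intro hb; exact absurd (Finset.mem_univ _) hb
  · rw [dif_neg h]
    apply Finset.sum_eq_zero
    intro b _
    rw [if_neg]
    intro hc
    have := b.isLt
    omega

lemma tkey1 (D : ℕ) (hD : 1 ≤ D) :
    (129/200:ℝ)^(D-1) + (129/200:ℝ)^(D+1) ≤ (11/5) * (129/200:ℝ)^D := by
  obtain ⟨E, rfl⟩ : ∃ E, D = E + 1 := ⟨D - 1, by omega⟩
  have h1 : (E + 1) - 1 = E := by omega
  rw [h1, pow_add, pow_add]
  have hE : (0:ℝ) < (129/200:ℝ)^E := by positivity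
  nlinarith [hE]

lemma tkey2 (D : ℕ) (hD : 1 ≤ D) :
    (129/200:ℝ)^(D-1) ≤ (11/5) * (129/200:ℝ)^D := by
  obtain ⟨E, rfl⟩ : ∃ E, D = E + 1 := ⟨D - 1, by omega⟩
  have h1 : (E + 1) - 1 = E := by omega
  rw [h1, pow_add]
  have hE : (0:ℝ) < (129/200:ℝ)^E := by positivity
  nlinarith [hE]

noncomputable def catx (n : ℕ) (i : Fin n) :
    (Fin (2 * n + 1) ⊕ (Σ j : Fin n, Fin (if j = i then 2 else 0))) → ℝ
  | Sum.inl a => (129/200 : ℝ) ^ (((a : ℕ) - (2 * (i : ℕ) + 1)) + ((2 * (i : ℕ) + 1) - (a : ℕ)))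
  | Sum.inr _ => 5/11

lemma catx_pos (n : ℕ) (i : Fin n) :
    ∀ v, 0 < catx n i v := by
  rintro (a | p)
  · show (0:ℝ) < (129/200 : ℝ) ^ _
    positivity
  · show (0:ℝ) < 5/11
    norm_num

lemma cat_bound (n : ℕ) (i : Fin n)
    (v : Fin (2 * n + 1) ⊕ (Σ j : Fin n, Fin (if j = i then 2 else 0))) :
    (∑ w, if (caterpillar n (fun j => if j = i then 2 else 0)).Adj v w then catx n i w else 0)
      ≤ (11/5) * catx n i v := by
  have hi : (i : ℕ) < n := i.isLt
  set G := caterpillar n (fun j => if j = i then 2 else 0) with hG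
  set m : ℕ := 2 * (i : ℕ) + 1 with hm
  set t : ℝ := 129/200 with ht
  have hcatl : ∀ b : Fin (2 * n + 1), catx n i (Sum.inl b) = t ^ (((b:ℕ) - m) + (m - (b:ℕ))) :=
    fun _ => rfl
  have hcatr : ∀ p, catx n i (Sum.inr p) = 5/11 := fun _ => rfl
  have adj_ll : ∀ a b : Fin (2 * n + 1),
      G.Adj (Sum.inl a) (Sum.inl b) ↔ ((a:ℕ) + 1 = (b:ℕ) ∨ (b:ℕ) + 1 = (a:ℕ)) := by
    intro a b
    rw [hG]
    simp only [caterpillar, SimpleGraph.fromRel_adj, catRel]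
    constructor
    · rintro ⟨-, h⟩; exact h
    · intro h
      refine ⟨?_, h⟩
      intro he
      have : a = b := by injection he
      subst this
      omega
  have adj_lr : ∀ (a : Fin (2 * n + 1)) (p : Σ j : Fin n, Fin (if j = i then 2 else 0)),
      G.Adj (Sum.inl a) (Sum.inr p) ↔ (a:ℕ) = 2 * (p.1:ℕ) + 1 := by
    intro a p
    rw [hG]
    simp only [caterpillar, SimpleGraph.fromRel_adj, catRel]
    constructor
    · rintro ⟨-, h | h⟩
      · exact h
      · exact h.elim
    · intro h
      exact ⟨by simp, Or.inl h⟩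
  have adj_rl : ∀ (p : Σ j : Fin n, Fin (if j = i then 2 else 0)) (a : Fin (2 * n + 1)),
      G.Adj (Sum.inr p) (Sum.inl a) ↔ (a:ℕ) = 2 * (p.1:ℕ) + 1 := by
    intro p a
    rw [G.adj_comm]
    exact adj_lr a p
  have adj_rr : ∀ (p q : Σ j : Fin n, Fin (if j = i then 2 else 0)),
      ¬ G.Adj (Sum.inr p) (Sum.inr q) := by
    intro p q h
    rw [hG] at h
    simp only [caterpillar, SimpleGraph.fromRel_adj, catRel] at h
    exact h.2.elim id id
  rw [Fintype.sum_sum_type]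
  obtain (a | p) := v
  · -- path vertex
    -- pendant part
    have e2 : (∑ p : (Σ j : Fin n, Fin (if j = i then 2 else 0)),
          if G.Adj (Sum.inl a) (Sum.inr p) then catx n i (Sum.inr p) else 0)
        = if (a:ℕ) = m then (10/11 : ℝ) else 0 := by
      have estep : ∀ p : (Σ j : Fin n, Fin (if j = i then 2 else 0)),
          (if G.Adj (Sum.inl a) (Sum.inr p) then catx n i (Sum.inr p) else 0)
            = if (a:ℕ) = 2 * (p.1:ℕ) + 1 then (5/11:ℝ) else 0 := by
        intro p
        rw [hcatr]
        by_cases h : (a:ℕ) = 2 * (p.1:ℕ) + 1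
        · rw [if_pos ((adj_lr a p).mpr h), if_pos h]
        · rw [if_neg (fun hc => h ((adj_lr a p).mp hc)), if_neg h]
      rw [Finset.sum_congr rfl (fun p _ => estep p)]
      rw [← Finset.univ_sigma_univ, Finset.sum_sigma]
      have einner : ∀ j : Fin n,
          (∑ _k : Fin (if j = i then 2 else 0), if (a:ℕ) = 2 * (j:ℕ) + 1 then (5/11:ℝ) else 0)
            = if j = i then (if (a:ℕ) = 2 * (j:ℕ) + 1 then (10/11:ℝ) else 0) else 0 := by
        intro j
        rw [Finset.sum_const, Finset.card_univ, Fintype.card_fin]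
        by_cases hj : j = i
        · rw [if_pos hj, if_pos hj]
          by_cases ha : (a:ℕ) = 2 * (j:ℕ) + 1 <;> simp [ha] <;> norm_num
        · rw [if_neg hj, if_neg hj, zero_smul]
      rw [Finset.sum_congr rfl (fun j _ => einner j), Finset.sum_ite_eq']
      simp [hm]
    rw [e2]
    -- path part
    have e1 : (∑ b : Fin (2 * n + 1),
          if G.Adj (Sum.inl a) (Sum.inl b) then catx n i (Sum.inl b) else 0)
        ≤ (∑ b : Fin (2 * n + 1), if (b:ℕ) = (a:ℕ) + 1 then catx n i (Sum.inl b) else 0)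
          + (∑ b : Fin (2 * n + 1), if (b:ℕ) + 1 = (a:ℕ) then catx n i (Sum.inl b) else 0) := by
      rw [← Finset.sum_add_distrib]
      refine Finset.sum_le_sum fun b _ => ?_
      have hpos : (0:ℝ) ≤ catx n i (Sum.inl b) := (catx_pos n i (Sum.inl b)).le
      by_cases h : G.Adj (Sum.inl a) (Sum.inl b)
      · rw [if_pos h]
        rcases (adj_ll a b).mp h with h1 | h1
        · rw [if_pos h1.symm]
          have : (0:ℝ) ≤ if (b:ℕ) + 1 = (a:ℕ) then catx n i (Sum.inl b) else 0 := by
            split <;> simp [hpos]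
          linarith
        · rw [if_pos h1]
          have : (0:ℝ) ≤ if (b:ℕ) = (a:ℕ) + 1 then catx n i (Sum.inl b) else 0 := by
            split <;> simp [hpos]
          linarith
      · rw [if_neg h]
        have h1 : (0:ℝ) ≤ if (b:ℕ) = (a:ℕ) + 1 then catx n i (Sum.inl b) else 0 := by
          split <;> simp [hpos]
        have h2 : (0:ℝ) ≤ if (b:ℕ) + 1 = (a:ℕ) then catx n i (Sum.inl b) else 0 := by
          split <;> simp [hpos]
        linarith
    have hT1 : (∑ b : Fin (2 * n + 1), if (b:ℕ) = (a:ℕ) + 1 then catx n i (Sum.inl b) else 0)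
        = if h : (a:ℕ) + 1 < 2 * n + 1
          then t ^ ((((a:ℕ)+1) - m) + (m - ((a:ℕ)+1))) else 0 := by
      rw [show (fun b : Fin (2*n+1) => if (b:ℕ) = (a:ℕ) + 1 then catx n i (Sum.inl b) else 0)
        = (fun b : Fin (2*n+1) => if (b:ℕ) = (a:ℕ) + 1
            then t ^ (((b:ℕ) - m) + (m - (b:ℕ))) else 0) from funext fun b => by rw [hcatl]]
      rw [sum_ite_coe]
    have hT2 : (∑ b : Fin (2 * n + 1), if (b:ℕ) + 1 = (a:ℕ) then catx n i (Sum.inl b) else 0)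
        = if h : (a:ℕ) - 1 < 2 * n + 1 ∧ 1 ≤ (a:ℕ)
          then t ^ ((((a:ℕ)-1) - m) + (m - ((a:ℕ)-1))) else 0 := by
      rw [show (fun b : Fin (2*n+1) => if (b:ℕ) + 1 = (a:ℕ) then catx n i (Sum.inl b) else 0)
        = (fun b : Fin (2*n+1) => if (b:ℕ) + 1 = (a:ℕ)
            then t ^ (((b:ℕ) - m) + (m - (b:ℕ))) else 0) from funext fun b => by rw [hcatl]]
      rw [sum_ite_coe']
    rw [hcatl]
    refine le_trans (add_le_add e1 le_rfl) ?_
    rw [hT1, hT2]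
    have ha2n : (a:ℕ) < 2 * n + 1 := a.isLt
    have hm2n : 1 ≤ m ∧ m ≤ 2 * n - 1 ∧ m < 2 * n := by omega
    -- case analysis on position of a
    rcases lt_trichotomy ((a:ℕ)) m with hcase | hcase | hcase
    · -- a < m, so a ≠ m; S₂ = 0
      rw [if_neg (by omega)]
      have hDa : ((a:ℕ) - m) + (m - (a:ℕ)) = m - (a:ℕ) := by omega
      by_cases ha0 : (a:ℕ) = 0
      · -- endpoint
        rw [dif_pos (by omega), dif_neg (by omega)]
        have h1 : (((a:ℕ)+1) - m) + (m - ((a:ℕ)+1)) = (m - (a:ℕ)) - 1 := by omega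
        rw [h1, hDa]
        have := tkey2 (m - (a:ℕ)) (by omega)
        rw [ht]
        linarith [this]
      · rw [dif_pos (by omega), dif_pos (by omega)]
        have h1 : (((a:ℕ)+1) - m) + (m - ((a:ℕ)+1)) = (m - (a:ℕ)) - 1 := by omega
        have h2 : (((a:ℕ)-1) - m) + (m - ((a:ℕ)-1)) = (m - (a:ℕ)) + 1 := by omega
        rw [h1, h2, hDa]
        have := tkey1 (m - (a:ℕ)) (by omega)
        rw [ht]
        linarith [this]
    · -- a = m : center
      rw [if_pos hcase]
      rw [dif_pos (by omega), dif_pos (by omega)]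
      have h1 : (((a:ℕ)+1) - m) + (m - ((a:ℕ)+1)) = 1 := by omega
      have h2 : (((a:ℕ)-1) - m) + (m - ((a:ℕ)-1)) = 1 := by omega
      have hDa : ((a:ℕ) - m) + (m - (a:ℕ)) = 0 := by omega
      rw [h1, h2, hDa, ht]
      norm_num
    · -- a > m
      rw [if_neg (by omega)]
      have hDa : ((a:ℕ) - m) + (m - (a:ℕ)) = (a:ℕ) - m := by omega
      by_cases ha2 : (a:ℕ) = 2 * n
      · rw [dif_neg (by omega), dif_pos (by omega)]
        have h2 : (((a:ℕ)-1) - m) + (m - ((a:ℕ)-1)) = ((a:ℕ) - m) - 1 := by omega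
        rw [h2, hDa]
        have := tkey2 ((a:ℕ) - m) (by omega)
        rw [ht]
        linarith [this]
      · rw [dif_pos (by omega), dif_pos (by omega)]
        have h1 : (((a:ℕ)+1) - m) + (m - ((a:ℕ)+1)) = ((a:ℕ) - m) + 1 := by omega
        have h2 : (((a:ℕ)-1) - m) + (m - ((a:ℕ)-1)) = ((a:ℕ) - m) - 1 := by omega
        rw [h1, h2, hDa]
        have := tkey1 ((a:ℕ) - m) (by omega)
        rw [ht]
        linarith [this]
  · -- pendant vertex
    have hp : (p.1 : Fin n) = i := by
      by_contra h
      have h0 : (if p.1 = i then 2 else 0) = 0 := if_neg h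
      exact (h0 ▸ p.2).elim0
    have e3 : (∑ q : (Σ j : Fin n, Fin (if j = i then 2 else 0)),
        if G.Adj (Sum.inr p) (Sum.inr q) then catx n i (Sum.inr q) else 0) = 0 := by
      apply Finset.sum_eq_zero
      intro q _
      rw [if_neg (adj_rr p q)]
    have e4 : (∑ b : Fin (2 * n + 1),
        if G.Adj (Sum.inr p) (Sum.inl b) then catx n i (Sum.inl b) else 0)
        = ∑ b : Fin (2 * n + 1), if (b:ℕ) = m then t ^ (((b:ℕ) - m) + (m - (b:ℕ))) else 0 := by
      refine Finset.sum_congr rfl fun b _ => ?_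
      rw [hcatl]
      have : ((b:ℕ) = 2 * (p.1:ℕ) + 1) ↔ ((b:ℕ) = m) := by rw [hp, hm]
      by_cases h : (b:ℕ) = m
      · rw [if_pos ((adj_rl p b).mpr (this.mpr h)), if_pos h]
      · rw [if_neg (fun hc => h (this.mp ((adj_rl p b).mp hc))), if_neg h]
    rw [e3, e4, sum_ite_coe, hcatr]
    rw [dif_pos (by omega)]
    have : m - m + (m - m) = 0 := by omega
    rw [this]
    norm_num [ht]

lemma getD_bound {V : Type*} [Fintype V] (G : SimpleGraph V) (c : ℝ) (hc : 0 ≤ c)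
    (h : ∀ lam ∈ (gCharpoly G).roots, |lam| ≤ c) :
    |((eigsDesc G).getD 0 0)| ≤ c := by
  rw [eigsDesc]
  cases hL : ((gCharpoly G).roots.sort (· ≤ ·)).reverse with
  | nil => simpa [hL] using hc
  | cons a l =>
    have ha : a ∈ ((gCharpoly G).roots.sort (· ≤ ·)).reverse := by
      rw [hL]; exact List.mem_cons_self
    rw [List.mem_reverse] at ha
    have := (Multiset.mem_sort _).mp ha
    simpa [hL] using h a this

theorem stmt11 (n : ℕ) (i : Fin n) (r : Fin n → ℕ) (hr : r = fun j => if j = i then 2 else 0) :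
    ((eigsDesc (caterpillar n r)).getD 0 0) ^ 2 < 5 := by
  subst hr
  have key : ∀ lam ∈ (gCharpoly (caterpillar n fun j => if j = i then 2 else 0)).roots,
      |lam| ≤ 11/5 := by
    intro lam hl
    exact graph_eig_bound _ (catx n i) (catx_pos n i) (11/5) (cat_bound n i) hl
  have hb := getD_bound (caterpillar n fun j => if j = i then 2 else 0) (11/5) (by norm_num) key
  set z := ((eigsDesc (caterpillar n fun j => if j = i then 2 else 0)).getD 0 0) with hz
  have h2 : z ^ 2 = |z| ^ 2 := (sq_abs z).symm
  have h3 : |z| ^ 2 ≤ (11/5:ℝ) ^ 2 := pow_le_pow_left₀ (abs_nonneg z) hb 2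
  rw [h2]
  nlinarith [h3]
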